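/- Let N ≥ 1 and let q be a primitive (6N-3)-th root of unity with q^{2N-1} = e^{2πi/3}, and set ω = e^{πi/3}. Then Σ_{k=1}^{N-1} q^k(1+ω q^{3k})(1-ω q^k)/(1-q^{6k}) = 0. -/

import Mathlib

open Finset Complex Real

private lemma pointwise_aux (x u v ω : ℂ) (hω2 : ω^2 = ω - 1) (hu : u * x = ω^2)
    (hv : v * x^2 = ω^2) (huv : x * v = u)
    (h1 : 1 - x ≠ 0) (h2 : 1 - x^2 ≠ 0) (h6 : 1 - x^6 ≠ 0)
    (hu1 : 1 - u ≠ 0) (hv1 : 1 - v ≠ 0) :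
    x * (1 + ω * x^3) * (1 - ω * x) / (1 - x^6)
      = (2 - ω)/3 * (1/(1-x) + 1/(1-u) - 1/(1-x^2) - 1/(1-v)) := by
  have key : x * (1 + ω*x^3) * (1-ω*x) * (3 * ((1-x)*(1-u)*(1-x^2)*(1-v)))
      = (2-ω) * ((1-u)*(1-x^2)*(1-v) + (1-x)*(1-x^2)*(1-v) - (1-x)*(1-u)*(1-v)
          - (1-x)*(1-u)*(1-x^2)) * (1-x^6) := by
    linear_combination
      ((1:ℂ) + (-2:ℂ)*ω + (1:ℂ)*v + (1:ℂ)*v*ω + (3:ℂ)*x + (3:ℂ)*x*ω + (-1:ℂ)*x*v + (-4:ℂ)*x*v*ω + (1:ℂ)*x^2 + (-2:ℂ)*x^2*ω + (-3:ℂ)*x^2*v + (3:ℂ)*x^2*v*ω + (-3:ℂ)*x^3 + (-6:ℂ)*x^3*ω + (3:ℂ)*x^3*v + (6:ℂ)*x^3*v*ω + (6:ℂ)*x^4*ω + (3:ℂ)*x^4*ω^2 + (-6:ℂ)*x^4*v*ω + (-3:ℂ)*x^4*v*ω^2 + (2:ℂ)*x^5 + (2:ℂ)*x^5*ω + (-3:ℂ)*x^5*ω^2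 + (-3:ℂ)*x^5*v*ω + (3:ℂ)*x^5*v*ω^2 + (-4:ℂ)*x^6 + (-1:ℂ)*x^6*ω + (-3:ℂ)*x^6*ω^2 + (2:ℂ)*x^6*v + (2:ℂ)*x^6*v*ω + (3:ℂ)*x^6*v*ω^2 + (3:ℂ)*x^7*ω^2 + (-2:ℂ)*x^7*v + (1:ℂ)*x^7*v*ω + (-3:ℂ)*x^7*v*ω^2 + (2:ℂ)*x^8 + (-1:ℂ)*x^8*ω) * hu
      + ((-1:ℂ) + (5:ℂ)*ω + (-3:ℂ)*ω^2 + (3:ℂ)*ω^3 + (5:ℂ)*x + (-4:ℂ)*x*ω + (3:ℂ)*x*ω^2 + (6:ℂ)*x*ω^3 + (-3:ℂ)*x^2 + (-6:ℂ)*x^2*ω + (-6:ℂ)*x^2*ω^3 + (-3:ℂ)*x^2*ω^4 + (6:ℂ)*x^3*ω + (3:ℂ)*x^3*ω^2 + (-3:ℂ)*x^3*ω^3 + (3:ℂ)*x^3*ω^4 + (-2:ℂ)*x^4 + (4:ℂ)*x^4*ω + (-1:ℂ)*x^4*ω^2 + (2:ℂ)*x^4*ω^3 + (3:ℂ)*x^4*ω^4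 + (-3:ℂ)*x^5*ω + (-5:ℂ)*x^5*ω^2 + (1:ℂ)*x^5*ω^3 + (-3:ℂ)*x^5*ω^4 + (4:ℂ)*x^6 + (-2:ℂ)*x^6*ω + (3:ℂ)*x^6*ω^2 + (-2:ℂ)*x^7 + (1:ℂ)*x^7*ω) * hv
      + ((3:ℂ)*ω^3 + (2:ℂ)*v + (1:ℂ)*v*ω + (1:ℂ)*x + (2:ℂ)*x*ω + (9:ℂ)*x*ω^2 + (6:ℂ)*x*ω^3 + (-5:ℂ)*x*v + (-4:ℂ)*x*v*ω + (-1:ℂ)*x^2 + (-5:ℂ)*x^2*ω + (-6:ℂ)*x^2*ω^2 + (-9:ℂ)*x^2*ω^3 + (-3:ℂ)*x^2*ω^4 + (-3:ℂ)*x^3 + (3:ℂ)*x^3*ω^4 + (3:ℂ)*x^4 + (9:ℂ)*x^4*ω + (4:ℂ)*x^4*ω^2 + (5:ℂ)*x^4*ω^3 + (3:ℂ)*x^4*ω^4 + (-6:ℂ)*x^5*ω + (-7:ℂ)*x^5*ω^2 + (-2:ℂ)*x^5*ω^3 + (-3:ℂ)*x^5*ω^4 + (-3:ℂ)*x^6*ω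 + (2:ℂ)*x^7 + (4:ℂ)*x^7*ω + (3:ℂ)*x^7*ω^2 + (-2:ℂ)*x^8 + (-1:ℂ)*x^8*ω) * hω2
      + ((2:ℂ) - ω) * huv
  have hD : (3:ℂ) * ((1-x)*(1-u)*(1-x^2)*(1-v)) ≠ 0 := by
    apply mul_ne_zero (by norm_num)
    exact mul_ne_zero (mul_ne_zero (mul_ne_zero h1 hu1) h2) hv1
  have expand : (2 - ω)/3 * (1/(1-x) + 1/(1-u) - 1/(1-x^2) - 1/(1-v))
      = (2-ω) * ((1-u)*(1-x^2)*(1-v) + (1-x)*(1-x^2)*(1-v) - (1-x)*(1-u)*(1-v)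
          - (1-x)*(1-u)*(1-x^2)) / (3 * ((1-x)*(1-u)*(1-x^2)*(1-v))) := by
    rw [div_mul_eq_mul_div, div_eq_div_iff (by norm_num) hD]
    field_simp
  rw [expand, div_eq_div_iff h6 hD]
  linear_combination key

private lemma sumB_aux (F : ℕ → ℂ) (N : ℕ) (hN : 1 ≤ N) :
    ∑ k ∈ Finset.Icc 1 (N-1), (F (2*k) + F (2*N-1-2*k)) = ∑ m ∈ Finset.Icc 1 (2*N-2), F m := by
  rw [Finset.sum_add_distrib]
  have hE : ∑ k ∈ Finset.Icc 1 (N-1), F (2*k)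
      = ∑ m ∈ (Finset.Icc 1 (2*N-2)).filter (fun m => m % 2 = 0), F m := by
    refine Finset.sum_nbij' (fun k => 2*k) (fun m => m/2) ?_ ?_ ?_ ?_ ?_ <;>
      intro a ha <;> simp only [Finset.mem_filter, Finset.mem_Icc] at * <;>
      first
        | omega
        | (congr 1; omega)
  have hO : ∑ k ∈ Finset.Icc 1 (N-1), F (2*N-1-2*k)
      = ∑ m ∈ (Finset.Icc 1 (2*N-2)).filter (fun m => ¬ m % 2 = 0), F m := by
    refine Finset.sum_nbij' (fun k => 2*N-1-2*k) (fun m => (2*N-1-m)/2) ?_ ?_ ?_ ?_ ?_ <;>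
      intro a ha <;> simp only [Finset.mem_filter, Finset.mem_Icc] at * <;>
      first
        | omega
        | (congr 1; omega)
  rw [hE, hO, Finset.sum_filter_add_sum_filter_not]

private lemma sumA_aux (F : ℕ → ℂ) (N : ℕ) (hN : 1 ≤ N) :
    ∑ k ∈ Finset.Icc 1 (N-1), (F k + F (2*N-1-k)) = ∑ m ∈ Finset.Icc 1 (2*N-2), F m := by
  rw [Finset.sum_add_distrib]
  have hE : ∑ k ∈ Finset.Icc 1 (N-1), F k
      = ∑ m ∈ (Finset.Icc 1 (2*N-2)).filter (fun m => m ≤ N-1), F m := by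
    refine Finset.sum_nbij' (fun k => k) (fun m => m) ?_ ?_ ?_ ?_ ?_ <;>
      intro a ha <;> simp only [Finset.mem_filter, Finset.mem_Icc] at * <;>
      first
        | omega
        | rfl
  have hO : ∑ k ∈ Finset.Icc 1 (N-1), F (2*N-1-k)
      = ∑ m ∈ (Finset.Icc 1 (2*N-2)).filter (fun m => ¬ m ≤ N-1), F m := by
    refine Finset.sum_nbij' (fun k => 2*N-1-k) (fun m => 2*N-1-m) ?_ ?_ ?_ ?_ ?_ <;>
      intro a ha <;> simp only [Finset.mem_filter, Finset.mem_Icc] at * <;>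
      first
        | omega
        | (congr 1; omega)
  rw [hE, hO, Finset.sum_filter_add_sum_filter_not]

theorem key_sum_eq_zero
    (N : ℕ) (hN : 1 ≤ N) (q : ℂ) (hq : IsPrimitiveRoot q (6 * N - 3))
    (hq' : q ^ (2 * N - 1) = Complex.exp (2 * Real.pi * Complex.I / 3))
    (ω : ℂ) (hω : ω = Complex.exp (Real.pi * Complex.I / 3)) :
    ∑ k ∈ Finset.Icc 1 (N - 1),
      q ^ k * (1 + ω * q ^ (3 * k)) * (1 - ω * q ^ k) / (1 - q ^ (6 * k)) = 0 := by
  have hne : ∀ m : ℕ, 0 < m → m < 3*(2*N-1) → (1:ℂ) - q^m ≠ 0 := by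
    intro m h0 hm
    have := hq.pow_ne_one_of_pos_of_lt h0.ne' (by omega)
    exact sub_ne_zero_of_ne (Ne.symm this)
  -- facts about ω
  have hωval : ω = 1/2 + (Real.sqrt 3)/2 * Complex.I := by
    rw [hω]
    have h1 : ((Real.pi : ℂ) * Complex.I / 3 : ℂ) = ((Real.pi/3 : ℝ) : ℂ) * Complex.I := by
      push_cast; ring
    rw [h1, Complex.exp_mul_I, ← Complex.ofReal_cos, ← Complex.ofReal_sin,
      Real.cos_pi_div_three, Real.sin_pi_div_three]
    push_cast; ring
  have hs : ((Real.sqrt 3 : ℝ) : ℂ)^2 = 3 := by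
    rw [← Complex.ofReal_pow, Real.sq_sqrt (by norm_num : (0:ℝ) ≤ 3)]; norm_num
  have hω2 : ω^2 = ω - 1 := by
    rw [hωval]
    linear_combination (Complex.I^2/4) * hs + (3/4 : ℂ) * Complex.I_sq
  have hqM : q^(2*N-1) = ω^2 := by
    rw [hq', hω, sq, ← Complex.exp_add]
    congr 1
    ring
  -- pointwise rewriting
  have step : ∀ k ∈ Finset.Icc 1 (N-1),
      q ^ k * (1 + ω * q ^ (3 * k)) * (1 - ω * q ^ k) / (1 - q ^ (6 * k))
        = (2 - ω)/3 * ((fun m => 1/(1 - q^m)) k + (fun m => 1/(1 - q^m)) (2*N-1-k)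
            - (fun m => 1/(1 - q^m)) (2*k) - (fun m => 1/(1 - q^m)) (2*N-1-2*k)) := by
    intro k hk
    simp only [Finset.mem_Icc] at hk
    obtain ⟨hk1, hk2⟩ := hk
    have hx2 : q^(2*k) = (q^k)^2 := by rw [mul_comm, pow_mul]
    have hx3 : q^(3*k) = (q^k)^3 := by rw [mul_comm, pow_mul]
    have hx6 : q^(6*k) = (q^k)^6 := by rw [mul_comm, pow_mul]
    have hu : q^(2*N-1-k) * q^k = ω^2 := by
      rw [← pow_add, show (2*N-1-k)+k = 2*N-1 by omega]; exact hqM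
    have hv : q^(2*N-1-2*k) * (q^k)^2 = ω^2 := by
      rw [← hx2, ← pow_add, show (2*N-1-2*k)+2*k = 2*N-1 by omega]; exact hqM
    have huv : q^k * q^(2*N-1-2*k) = q^(2*N-1-k) := by
      rw [← pow_add, show k+(2*N-1-2*k) = 2*N-1-k by omega]
    have h1 : 1 - q^k ≠ 0 := hne k (by omega) (by omega)
    have h2 : 1 - (q^k)^2 ≠ 0 := by rw [← hx2]; exact hne (2*k) (by omega) (by omega)
    have h6 : 1 - (q^k)^6 ≠ 0 := by rw [← hx6]; exact hne (6*k) (by omega) (by omega)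
    have hu1 : 1 - q^(2*N-1-k) ≠ 0 := hne _ (by omega) (by omega)
    have hv1 : 1 - q^(2*N-1-2*k) ≠ 0 := hne _ (by omega) (by omega)
    simp only []
    rw [hx3, hx6, hx2]
    exact pointwise_aux (q^k) (q^(2*N-1-k)) (q^(2*N-1-2*k)) ω hω2 hu hv huv h1 h2 h6 hu1 hv1
  rw [Finset.sum_congr rfl step, ← Finset.mul_sum]
  have split : ∑ k ∈ Finset.Icc 1 (N-1),
      ((fun m => 1/(1 - q^m)) k + (fun m => 1/(1 - q^m)) (2*N-1-k)
        - (fun m => 1/(1 - q^m)) (2*k) - (fun m => 1/(1 - q^m)) (2*N-1-2*k))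
      = (∑ k ∈ Finset.Icc 1 (N-1), ((fun m => 1/(1 - q^m)) k + (fun m => 1/(1 - q^m)) (2*N-1-k)))
        - ∑ k ∈ Finset.Icc 1 (N-1), ((fun m => 1/(1 - q^m)) (2*k) + (fun m => 1/(1 - q^m)) (2*N-1-2*k)) := by
    rw [← Finset.sum_sub_distrib]
    exact Finset.sum_congr rfl (fun k _ => by ring)
  rw [split, sumA_aux (fun m => 1/(1 - q^m)) N hN, sumB_aux (fun m => 1/(1 - q^m)) N hN,
    sub_self, mul_zero]
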